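/- Let V = V₁ ⊕ V₂ ⊕ V₃ where V₁ = 𝔽₂^{2m-4} (m ≥ 3) carries a quadratic form Q₁ of Arf invariant 1 whose polar form is the standard symplectic form, and V₂ = V₃ = 𝔽₂² each carry the form Qᵢ(a eᵢ + b fᵢ) = a² + ab + b². Let σ, τ ∈ O(Q₁) satisfy: σ ≠ id; τ² = id; τστ = σ^{-1}; σ^i has no nonzero fixed vector whenever σ^i ≠ id; and each τσ^i fixes some vector x with Q₁(x) = 1. Let η swap V₂ and V₃ via η(e₂)=e₃, η(f₂)=f₃, η(e₃)=e₂, η(f₃)=f₂, and let G ⊂ O(Q₁ ⊕ Q₂ ⊕ Q₃) be generated by (σ, id) and (τ, η). Then: (1) no vector v ∈ V with Q(v) = 1 is fixed by all elements of G; (2) every element g ∈ G fixes some vector v ∈ V with Q(v) = 1. -/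

import Mathlib

/-- **The key construction: the group G = ⟨(σ, id), (τ, η)⟩ in O(Q₁ ⊕ Q₂ ⊕ Q₃).**
Let `V₁` be a `(2m-4)`-dimensional `𝔽₂`-space (`m ≥ 3`) with a quadratic form `Q₁`
of Arf invariant `1` (encoded by its count `#{Q₁ = 1} = 2^(m-3)(2^(m-2)+1)`) whose
polar form `b₁` is nondegenerate and alternating.  Let `V₂ = V₃ = 𝔽₂²` carry
`q(a,b) = a² + ab + b²`, and `Q = Q₁ ⊕ q ⊕ q` on `V = V₁ × (V₂ × V₃)`.
Let `σ, τ ∈ O(Q₁)` satisfy: `σ ≠ 1`; `τ² = 1`; `τστ = σ⁻¹`; `σ^i` has no nonzero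
fixed vector whenever `σ^i ≠ 1`; each `τσ^i` fixes some `x` with `Q₁ x = 1`.
Let `η` swap the two factors `V₂, V₃`, and let `G` be generated by `(σ, id)` and
`(τ, η)`.  Then (1) no `v ∈ V` with `Q v = 1` is fixed by all of `G`, and
(2) every `g ∈ G` fixes some `v ∈ V` with `Q v = 1`. -/
theorem stmt13 (m : ℕ) (hm : 3 ≤ m)
    (V₁ : Type*) [AddCommGroup V₁] [Module (ZMod 2) V₁] [FiniteDimensional (ZMod 2) V₁]
    (hd₁ : Module.finrank (ZMod 2) V₁ = 2 * m - 4)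
    (b₁ : LinearMap.BilinForm (ZMod 2) V₁) (hb₁nd : b₁.Nondegenerate)
    (hb₁alt : ∀ x : V₁, b₁ x x = 0)
    (Q₁ : V₁ → ZMod 2) (hQ₁ : ∀ x y : V₁, Q₁ (x + y) + Q₁ x + Q₁ y = b₁ x y)
    (hArf₁ : Nat.card {x : V₁ // Q₁ x = 1} = 2 ^ (m - 3) * (2 ^ (m - 2) + 1))
    (σ τ : V₁ ≃ₗ[ZMod 2] V₁)
    (hσQ : ∀ x : V₁, Q₁ (σ x) = Q₁ x) (hτQ : ∀ x : V₁, Q₁ (τ x) = Q₁ x)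
    (hσne : σ ≠ 1) (hτ2 : τ * τ = 1) (hτστ : τ * σ * τ = σ⁻¹)
    (hσfix : ∀ i : ℕ, σ ^ i ≠ 1 → ∀ x : V₁, (σ ^ i) x = x → x = 0)
    (hτσfix : ∀ i : ℕ, ∃ x : V₁, (τ * σ ^ i) x = x ∧ Q₁ x = 1) :
    let W := ZMod 2 × ZMod 2
    let q : W → ZMod 2 := fun p => p.1 ^ 2 + p.1 * p.2 + p.2 ^ 2
    let V := V₁ × (W × W)
    let Q : V → ZMod 2 := fun v => Q₁ v.1 + q v.2.1 + q v.2.2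
    let η : (W × W) ≃ₗ[ZMod 2] (W × W) := LinearEquiv.prodComm (ZMod 2) W W
    let A : V ≃ₗ[ZMod 2] V := σ.prodCongr (LinearEquiv.refl (ZMod 2) (W × W))
    let B : V ≃ₗ[ZMod 2] V := τ.prodCongr η
    let G : Subgroup (V ≃ₗ[ZMod 2] V) := Subgroup.closure {A, B}
    (¬ ∃ v : V, Q v = 1 ∧ ∀ g ∈ G, g v = v) ∧
    (∀ g ∈ G, ∃ v : V, Q v = 1 ∧ g v = v) := by
  intro W q V Q η A B G
  have mulapp : ∀ (f g : V ≃ₗ[ZMod 2] V) (v : V), (f * g) v = f (g v) := fun _ _ _ => rfl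
  have mulapp1 : ∀ (f g : V₁ ≃ₗ[ZMod 2] V₁) (x : V₁), (f * g) x = f (g x) := fun _ _ _ => rfl
  have two : ∀ a : ZMod 2, a + a = 0 := by decide
  have hQ₁0 : Q₁ 0 = 0 := by
    have h := hQ₁ 0 0
    rw [add_zero, map_zero] at h
    rw [two (Q₁ 0), zero_add] at h
    simpa using h
  have hAapp : ∀ v : V, A v = (σ v.1, v.2) := fun v => rfl
  have hBapp : ∀ v : V, B v = (τ v.1, (v.2.2, v.2.1)) := fun v => rfl
  have hApow : ∀ (i : ℕ) (v : V), (A ^ i) v = ((σ ^ i) v.1, v.2) := by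
    intro i
    induction i with
    | zero => intro v; simp
    | succ k ih =>
      intro v
      rw [pow_succ, mulapp, hAapp, ih, pow_succ, mulapp1]
  haveI : Finite V₁ := Module.finite_of_finite (ZMod 2)
  haveI : Finite (V ≃ₗ[ZMod 2] V) :=
    Finite.of_injective (fun e : V ≃ₗ[ZMod 2] V => (e : V → V)) DFunLike.coe_injective
  obtain ⟨n, hn, hAn⟩ := (isOfFinOrder_of_finite A).exists_pow_eq_one
  have hAinv : A⁻¹ = A ^ (n - 1) := by
    refine inv_eq_of_mul_eq_one_right ?_
    rw [← pow_succ', Nat.sub_add_cancel hn, hAn]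
  have hB2 : B * B = 1 := by
    refine LinearEquiv.ext fun v => ?_
    rw [mulapp, hBapp, hBapp]
    have h : (τ * τ) v.1 = v.1 := by rw [hτ2]; rfl
    rw [mulapp1] at h
    simp [h]
  have hBA : B * A = A⁻¹ * B := by
    refine LinearEquiv.ext fun v => ?_
    have hτσ : ∀ x : V₁, τ (σ x) = σ⁻¹ (τ x) := by
      intro x
      have h1 : (τ * σ * τ) (τ x) = σ⁻¹ (τ x) := by rw [hτστ]
      have h2 : (τ * τ) x = x := by rw [hτ2]; rfl
      rw [mulapp1, mulapp1] at h1
      rw [mulapp1] at h2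
      rw [h2] at h1
      exact h1
    rw [mulapp, mulapp, hAapp, hBapp, hBapp]
    have h3 : A⁻¹ (τ v.1, (v.2.2, v.2.1)) = (σ⁻¹ (τ v.1), (v.2.2, v.2.1)) := rfl
    rw [h3]
    simp [hτσ]
  have hcomm : ∀ i : ℕ, B * A ^ i = (A⁻¹) ^ i * B := by
    intro i
    induction i with
    | zero => simp
    | succ k ih =>
      rw [pow_succ, ← mul_assoc, ih, mul_assoc, hBA, pow_succ, ← mul_assoc, mul_assoc]
  have hinvpow : ∀ i : ℕ, (A⁻¹) ^ i = A ^ ((n - 1) * i) := by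
    intro i
    rw [hAinv, ← pow_mul]
  have hcomm2 : ∀ i : ℕ, A ^ i * B = B * A ^ ((n - 1) * i) := by
    intro i
    rw [← hinvpow]
    calc A ^ i * B = (B * B) * (A ^ i * B) := by rw [hB2, one_mul]
      _ = B * (B * A ^ i) * B := by group
      _ = B * ((A⁻¹) ^ i * B) * B := by rw [hcomm]
      _ = B * (A⁻¹) ^ i * (B * B) := by group
      _ = B * (A⁻¹) ^ i := by rw [hB2, mul_one]
  have hmulBB : ∀ i j : ℕ, (B * A ^ i) * (B * A ^ j) = A ^ ((n - 1) * i + j) := by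
    intro i j
    calc (B * A ^ i) * (B * A ^ j) = B * (A ^ i * B) * A ^ j := by group
      _ = B * (B * A ^ ((n - 1) * i)) * A ^ j := by rw [hcomm2]
      _ = (B * B) * A ^ ((n - 1) * i) * A ^ j := by group
      _ = A ^ ((n - 1) * i) * A ^ j := by rw [hB2, one_mul]
      _ = A ^ ((n - 1) * i + j) := by rw [← pow_add]
  have key : ∀ g ∈ G, (∃ i : ℕ, g = A ^ i) ∨ (∃ i : ℕ, g = B * A ^ i) := by
    intro g hg
    refine Subgroup.closure_induction ?_ ?_ ?_ ?_ hg
    · rintro x (rfl | rfl)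
      · exact Or.inl ⟨1, (pow_one _).symm⟩
      · exact Or.inr ⟨0, by simp⟩
    · exact Or.inl ⟨0, (pow_zero _).symm⟩
    · rintro x y hx hy (⟨i, rfl⟩ | ⟨i, rfl⟩) (⟨j, rfl⟩ | ⟨j, rfl⟩)
      · exact Or.inl ⟨i + j, (pow_add _ _ _).symm⟩
      · refine Or.inr ⟨(n - 1) * i + j, ?_⟩
        rw [← mul_assoc, hcomm2, mul_assoc, ← pow_add]
      · exact Or.inr ⟨i + j, by rw [mul_assoc, ← pow_add]⟩
      · exact Or.inl ⟨(n - 1) * i + j, hmulBB i j⟩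
    · rintro x hx (⟨i, rfl⟩ | ⟨i, rfl⟩)
      · exact Or.inl ⟨(n - 1) * i, by rw [← hinvpow, inv_pow]⟩
      · refine Or.inr ⟨i, ?_⟩
        refine inv_eq_of_mul_eq_one_right ?_
        rw [hmulBB i i]
        have he : (n - 1) * i + i = n * i := by
          cases n with
          | zero => omega
          | succ k => simp [Nat.succ_mul, Nat.add_mul]
        rw [he, pow_mul, hAn, one_pow]
  constructor
  · rintro ⟨v, hQv, hfix⟩
    have hAmem : A ∈ G := Subgroup.subset_closure (Set.mem_insert _ _)
    have hBmem : B ∈ G := Subgroup.subset_closure (Set.mem_insert_of_mem _ rfl)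
    have hA := hfix A hAmem
    have hB := hfix B hBmem
    rw [hAapp] at hA
    rw [hBapp] at hB
    have hv1 : v.1 = 0 := by
      refine hσfix 1 (by simpa using hσne) v.1 ?_
      rw [pow_one]
      exact congrArg Prod.fst hA
    have hv2 : v.2.2 = v.2.1 := congrArg (fun p : V => p.2.1) hB
    have hz : Q v = 0 := by
      show Q₁ v.1 + q v.2.1 + q v.2.2 = 0
      rw [hv1, hQ₁0, hv2, zero_add, two]
    rw [hQv] at hz
    exact one_ne_zero hz
  · intro g hg
    rcases key g hg with ⟨i, rfl⟩ | ⟨i, rfl⟩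
    · refine ⟨(0, ((1, 0), (0, 0))), ?_, ?_⟩
      · show Q₁ 0 + q (1, 0) + q (0, 0) = 1
        rw [hQ₁0]
        show (0 : ZMod 2) + ((1:ZMod 2) ^ 2 + 1 * 0 + 0 ^ 2) + ((0:ZMod 2) ^ 2 + 0 * 0 + 0 ^ 2) = 1
        decide
      · rw [hApow]
        simp
    · obtain ⟨x, hxfix, hxQ⟩ := hτσfix i
      rw [mulapp1] at hxfix
      refine ⟨(x, ((0, 0), (0, 0))), ?_, ?_⟩
      · show Q₁ x + q (0, 0) + q (0, 0) = 1
        rw [hxQ]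
        show (1 : ZMod 2) + ((0:ZMod 2) ^ 2 + 0 * 0 + 0 ^ 2) + ((0:ZMod 2) ^ 2 + 0 * 0 + 0 ^ 2) = 1
        decide
      · rw [mulapp, hApow, hBapp]
        simp [hxfix]
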